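/- If an infinite word w avoids k-th powers for some k ≥ 2, then the palindromic length of its prefixes is unbounded: for every P there exists a prefix u of w such that u cannot be written as a concatenation of at most P palindromes. -/

import Mathlib

/-- `wpow u k` is the `k`-fold concatenation of the word `u`. -/
def wpow {A : Type*} (u : List A) (k : ℕ) : List A :=
  (List.replicate k u).flatten

/-- The factor of length `n` of the infinite word `w` starting at position `i`. -/
def wordFactor {A : Type*} (w : ℕ → A) (i n : ℕ) : List A :=
  (List.range n).map (fun t => w (i + t))

/-- `w` avoids `k`-th powers: no factor of `w` is of the form `u^k` with `u` nonempty. -/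
def AvoidsPower {A : Type*} (w : ℕ → A) (k : ℕ) : Prop :=
  ∀ u : List A, u ≠ [] → ∀ i : ℕ, wpow u k ≠ wordFactor w i (wpow u k).length

section aux

variable {A : Type*}

lemma wf_length (w : ℕ → A) (i n : ℕ) : (wordFactor w i n).length = n := by
  simp [wordFactor]

lemma wf_getElem (w : ℕ → A) (i n t : ℕ) (h : t < (wordFactor w i n).length) :
    (wordFactor w i n)[t] = w (i + t) := by
  simp [wordFactor]

lemma wf_add (w : ℕ → A) (i a b : ℕ) :
    wordFactor w i (a + b) = wordFactor w i a ++ wordFactor w (i + a) b := by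
  simp [wordFactor, List.range_add, Nat.add_assoc, Function.comp]

lemma wf_congr (w w' : ℕ → A) (i i' n : ℕ) (h : ∀ j < n, w (i + j) = w' (i' + j)) :
    wordFactor w i n = wordFactor w' i' n := by
  unfold wordFactor
  apply List.map_congr_left
  intro t ht
  exact h t (List.mem_range.mp ht)

lemma wpow_succ (u : List A) (c : ℕ) : wpow u (c + 1) = u ++ wpow u c := by
  simp [wpow, List.replicate_succ]

lemma wpow_length (u : List A) (c : ℕ) : (wpow u c).length = c * u.length := by
  induction c with
  | zero => simp [wpow]
  | succ c ih => rw [wpow_succ]; simp [ih, Nat.succ_mul]; ring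

/-- A palindromic factor gives the mirror property on letters. -/
lemma pal_mirror (w : ℕ → A) (i n : ℕ) (h : (wordFactor w i n).Palindrome) :
    ∀ t < n, w (i + t) = w (i + (n - 1 - t)) := by
  intro t ht
  have h2 : t < (wordFactor w i n).length := by simpa [wf_length] using ht
  have h1 : t < (wordFactor w i n).reverse.length := by simpa using h2
  have key : (wordFactor w i n).reverse[t]'h1 = (wordFactor w i n)[t]'h2 := by
    simp only [h.reverse_eq]
  rw [List.getElem_reverse, wf_getElem, wf_getElem] at key
  simp only [wf_length] at key
  exact key.symm

end aux

section growth

variable {A : Type*}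

/-- Two palindromic factors at the same position in a `k`-power-free word satisfy
the growth inequality. -/
lemma pal_growth (w : ℕ → A) (k : ℕ) (hk : 2 ≤ k) (hw : AvoidsPower w k)
    (i l l' : ℕ) (h1 : 0 < l) (hll : l < l')
    (hp : (wordFactor w i l).Palindrome) (hp' : (wordFactor w i l').Palindrome) :
    k * l < (k - 1) * l' := by
  by_contra hcon
  push_neg at hcon   -- (k-1) * l' ≤ k * l
  set p := l' - l with hpdef
  have hp0 : 0 < p := by omega
  have hlp : l' = l + p := by omega
  -- periodicity
  have hper : ∀ j < l, w (i + j) = w (i + (j + p)) := by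
    intro j hj
    have m' := pal_mirror w i l' hp' (j + p) (by omega)
    have m := pal_mirror w i l hp (j) hj
    have e1 : l' - 1 - (j + p) = l - 1 - j := by omega
    rw [e1] at m'
    rw [m, ← m']
  -- k * p ≤ l'
  have hkp : k * p ≤ l' := by
    have e : k * l' = k * l + k * p := by rw [hlp, Nat.mul_add]
    have e2 : (k - 1) * l' + l' = k * l' := by
      have h' : k - 1 + 1 = k := by omega
      calc (k - 1) * l' + l' = (k - 1 + 1) * l' := by ring
        _ = k * l' := by rw [h']
    have e3 : (k - 1) * l' + l' = k * l + k * p := e2.trans e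
    omega
  -- the power
  set u := wordFactor w i p with hudef
  have hpow : ∀ c, c * p ≤ l' → wpow u c = wordFactor w i (c * p) := by
    intro c
    induction c with
    | zero => intro _; simp [wpow, wordFactor]
    | succ c ih =>
      intro hc
      have hc' : c * p ≤ l' := le_trans (by nlinarith) hc
      have hcl : c * p ≤ l := by
        have : (c + 1) * p = c * p + p := by ring
        omega
      rw [wpow_succ, ih hc']
      have : (c + 1) * p = p + c * p := by ring
      rw [this, wf_add]
      congr 1
      apply wf_congr
      intro j hj
      have := hper j (by omega)
      rw [this]
      congr 1
      omega
  have hku := hpow k hkp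
  have hne : u ≠ [] := by
    intro h
    rw [hudef] at h
    have := congrArg List.length h
    rw [wf_length] at this
    simp at this
    omega
  have := hw u hne i
  rw [hku] at this
  apply this
  congr 1
  rw [← hku, wpow_length, hudef, wf_length]

end growth



lemma aux_pow : ∀ (K n : ℕ), K ^ n * (K + n) ≤ (K + 1) ^ n * K := by
  intro K n
  induction n with
  | zero => simp
  | succ n ih =>
    calc K ^ (n+1) * (K + (n+1)) = K ^ n * (K * (K + n + 1)) := by ring
      _ ≤ K ^ n * ((K + 1) * (K + n)) := Nat.mul_le_mul_left _ (by nlinarith)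
      _ = (K + 1) * (K ^ n * (K + n)) := by ring
      _ ≤ (K + 1) * ((K + 1) ^ n * K) := Nat.mul_le_mul_left _ ih
      _ = (K + 1) ^ (n+1) * K := by ring

lemma two_mul_pow_le (K : ℕ) (hK : 1 ≤ K) : 2 * K ^ K ≤ (K + 1) ^ K := by
  have h := aux_pow K K
  have h2 : K ^ K * (2 * K) = (K ^ K * (K + K)) := by ring
  have h3 : K ^ K * (2 * K) ≤ (K + 1) ^ K * K := by rw [h2]; exact h
  have h4 : (2 * K ^ K) * K ≤ ((K + 1) ^ K) * K := by
    calc (2 * K ^ K) * K = K ^ K * (2 * K) := by ring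
      _ ≤ (K + 1) ^ K * K := h3
  exact Nat.le_of_mul_le_mul_right h4 (by omega)

lemma chain_pow (k : ℕ) : ∀ n (S : Finset ℕ) (hS : S.Nonempty), S.card = n + 1 →
    (∀ l ∈ S, ∀ l' ∈ S, l < l' → k * l ≤ (k - 1) * l') →
    k ^ n * S.min' hS ≤ (k - 1) ^ n * S.max' hS := by
  intro n
  induction n with
  | zero =>
    intro S hS hcard hg
    simpa using S.min'_le _ (S.max'_mem hS)
  | succ n ih =>
    intro S hS hcard hg
    set m := S.min' hS with hm
    set S' := S.erase m with hS'def
    have hmS : m ∈ S := S.min'_mem hS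
    have hcard' : S'.card = n + 1 := by
      rw [hS'def, Finset.card_erase_of_mem hmS, hcard]; omega
    have hS' : S'.Nonempty := Finset.card_pos.mp (by omega)
    have hsub : S' ⊆ S := Finset.erase_subset _ _
    have hm' : S'.min' hS' ∈ S := hsub (S'.min'_mem hS')
    have hmm : m < S'.min' hS' := by
      have h1 : m ≤ S'.min' hS' := S.min'_le _ hm'
      have h2 : S'.min' hS' ≠ m := Finset.ne_of_mem_erase (S'.min'_mem hS')
      omega
    have hmax : S'.max' hS' = S.max' hS := by
      apply le_antisymm
      · exact S.le_max' _ (hsub (S'.max'_mem hS'))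
      · apply S'.le_max'
        apply Finset.mem_erase.mpr
        refine ⟨?_, S.max'_mem hS⟩
        have hlt : m < S.max' hS := lt_of_lt_of_le hmm (S.le_max' _ hm')
        omega
    have hpair : k * m ≤ (k - 1) * (S'.min' hS') := hg m hmS _ hm' hmm
    have hgrow' : ∀ l ∈ S', ∀ l' ∈ S', l < l' → k * l ≤ (k - 1) * l' :=
      fun l hl l' hl' hll => hg l (hsub hl) l' (hsub hl') hll
    have IH := ih S' hS' hcard' hgrow'
    calc k ^ (n+1) * m = k ^ n * (k * m) := by ring
      _ ≤ k ^ n * ((k - 1) * (S'.min' hS')) := Nat.mul_le_mul_left _ hpair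
      _ = (k - 1) * (k ^ n * S'.min' hS') := by ring
      _ ≤ (k - 1) * ((k - 1) ^ n * S'.max' hS') := Nat.mul_le_mul_left _ IH
      _ = (k - 1) ^ (n+1) * S'.max' hS' := by ring
      _ = (k - 1) ^ (n+1) * S.max' hS := by rw [hmax]

lemma chain_card_bound (k : ℕ) (hk : 2 ≤ k) (N : ℕ) (S : Finset ℕ)
    (h1 : ∀ l ∈ S, 1 ≤ l ∧ l ≤ N)
    (hg : ∀ l ∈ S, ∀ l' ∈ S, l < l' → k * l ≤ (k - 1) * l') :
    S.card ≤ (k - 1) * (Nat.log 2 N + 1) := by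
  rcases S.eq_empty_or_nonempty with rfl | hS
  · simp
  obtain ⟨c, hc⟩ : ∃ c, S.card = c + 1 := by
    have := Finset.card_pos.mpr hS
    exact ⟨S.card - 1, by omega⟩
  have key := chain_pow k c S hS hc hg
  have hmin : 1 ≤ S.min' hS := (h1 _ (S.min'_mem hS)).1
  have hmaxN : S.max' hS ≤ N := (h1 _ (S.max'_mem hS)).2
  set K := k - 1 with hK
  have hKpos : 0 < K := by omega
  have hkK : k = K + 1 := by omega
  -- k^c ≤ K^c * N
  have h2 : k ^ c ≤ K ^ c * N := by
    calc k ^ c = k ^ c * 1 := by ring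
      _ ≤ k ^ c * S.min' hS := Nat.mul_le_mul_left _ hmin
      _ ≤ K ^ c * S.max' hS := key
      _ ≤ K ^ c * N := Nat.mul_le_mul_left _ hmaxN
  set q := c / K with hq
  set r := c % K with hr
  have hqr : c = K * q + r := (Nat.div_add_mod c K).symm
  have hrK : r < K := Nat.mod_lt _ hKpos
  -- 2^q * K^c ≤ k^c
  have h3 : 2 ^ q * K ^ c ≤ k ^ c := by
    have hb : 2 * K ^ K ≤ k ^ K := by rw [hkK]; exact two_mul_pow_le K hKpos
    calc 2 ^ q * K ^ c = (2 * K ^ K) ^ q * K ^ r := by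
          rw [hqr]; rw [mul_pow, ← pow_mul, pow_add]; ring
      _ ≤ (k ^ K) ^ q * k ^ r :=
          Nat.mul_le_mul (Nat.pow_le_pow_left hb q) (Nat.pow_le_pow_left (by omega) r)
      _ = k ^ c := by rw [hqr, ← pow_mul, ← pow_add]
  have h4 : 2 ^ q * K ^ c ≤ K ^ c * N := le_trans h3 h2
  have h5 : 2 ^ q ≤ N := by
    have hKc : 0 < K ^ c := Nat.pow_pos hKpos
    have h4' : 2 ^ q * K ^ c ≤ N * K ^ c := by
      calc 2 ^ q * K ^ c ≤ K ^ c * N := h4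
        _ = N * K ^ c := by ring
    exact Nat.le_of_mul_le_mul_right h4' hKc
  have h6 : q ≤ Nat.log 2 N := Nat.le_log_of_pow_le one_lt_two h5
  have h7 : K * q ≤ K * Nat.log 2 N := Nat.mul_le_mul_left _ h6
  have h8 : K * (Nat.log 2 N + 1) = K * Nat.log 2 N + K := by ring
  omega

lemma exists_exp (a P : ℕ) : ∃ m : ℕ, 1 ≤ m ∧ (a * (m + 1)) ^ P ≤ 2 ^ m := by
  have T := tendsto_pow_const_div_const_pow_of_one_lt P (one_lt_two (α := ℝ))
  have hε : (0:ℝ) < 1 / ((2 * a + 1 : ℕ) : ℝ) ^ P := by positivity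
  have hev := T.eventually (gt_mem_nhds hε)
  obtain ⟨m, hm, hm1⟩ := (hev.and (Filter.eventually_ge_atTop 1)).exists
  refine ⟨m, hm1, ?_⟩
  have h2m : (0:ℝ) < 2 ^ m := by positivity
  have hD : (0:ℝ) < ((2 * a + 1 : ℕ) : ℝ) ^ P := by positivity
  rw [div_lt_div_iff₀ h2m hD] at hm
  -- hm : (m:ℝ)^P * (2a+1)^P < 1 * 2^m
  have key : (((2 * a + 1) * m : ℕ) : ℝ) ^ P < 2 ^ m := by
    have e : (((2 * a + 1) * m : ℕ) : ℝ) ^ P = (m:ℝ) ^ P * (((2 * a + 1 : ℕ)) : ℝ) ^ P := by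
      push_cast
      rw [mul_pow]
      ring
    rw [e]
    linarith
  have hnat : ((2 * a + 1) * m) ^ P < 2 ^ m := by exact_mod_cast key
  have hle : a * (m + 1) ≤ (2 * a + 1) * m := by nlinarith
  exact le_trans (Nat.pow_le_pow_left hle P) (le_of_lt hnat)

theorem palindromic_length_unbounded_of_avoids_power {A : Type*} (w : ℕ → A)
    (k : ℕ) (hk : 2 ≤ k) (hw : AvoidsPower w k) :
    ∀ P : ℕ, ∃ n : ℕ,
      ¬ ∃ L : List (List A), L.length ≤ P ∧ (∀ p ∈ L, p.Palindrome) ∧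
        L.flatten = wordFactor w 0 n := by
  intro P
  classical
  obtain ⟨m, hm1, hmP⟩ := exists_exp k P
  set N := 2 ^ m with hN
  set B := (k - 1) * (Nat.log 2 N + 1) with hB
  set Sset : ℕ → Finset ℕ :=
    fun i => (Finset.Icc 1 N).filter (fun l => (wordFactor w i l).Palindrome) with hSset
  have hScard : ∀ i : ℕ, (Sset i).card ≤ B := by
    intro i
    apply chain_card_bound k hk N
    · intro l hl
      simp only [hSset, Finset.mem_filter, Finset.mem_Icc] at hl
      exact ⟨hl.1.1, hl.1.2⟩
    · intro l hl l' hl' hll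
      simp only [hSset, Finset.mem_filter, Finset.mem_Icc] at hl hl'
      exact le_of_lt (pal_growth w k hk hw i l l' (by omega) hll hl.2 hl'.2)
  set Dset : ℕ → Finset ℕ := fun q => (Finset.range (N + 1)).filter
      (fun n => ∃ L : List (List A), L.length ≤ q ∧ (∀ p ∈ L, p.Palindrome) ∧
        L.flatten = wordFactor w 0 n) with hDset
  have hD : ∀ q : ℕ, (Dset q).card ≤ (B + 1) ^ q := by
    intro q
    induction q with
    | zero =>
      have hsub0 : Dset 0 ⊆ {0} := by
        intro n hn
        simp only [hDset, Finset.mem_filter, Finset.mem_range] at hn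
        obtain ⟨hn1, L, hL, -, hjoin⟩ := hn
        have hLnil : L = [] := List.length_eq_zero_iff.mp (by omega)
        subst hLnil
        have h0 : wordFactor w 0 n = ([] : List A) := by simpa using hjoin.symm
        have := congrArg List.length h0
        rw [wf_length, List.length_nil] at this
        simp [this]
      calc (Dset 0).card ≤ ({0} : Finset ℕ).card := Finset.card_le_card hsub0
        _ = 1 := Finset.card_singleton 0
        _ = (B + 1) ^ 0 := by simp
    | succ q ih =>
      have hsub : Dset (q + 1) ⊆
          (Dset q).biUnion (fun n' => (insert 0 (Sset n')).image (fun l => n' + l)) := by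
        intro n hn
        simp only [hDset, Finset.mem_filter, Finset.mem_range] at hn
        obtain ⟨hnN, L, hL, hpal, hjoin⟩ := hn
        rcases List.eq_nil_or_concat L with rfl | ⟨L', Pl, rfl⟩
        · have h0 : n = 0 := by
            have he : wordFactor w 0 n = ([] : List A) := by simpa using hjoin.symm
            have := congrArg List.length he
            rwa [wf_length, List.length_nil] at this
          apply Finset.mem_biUnion.mpr
          refine ⟨0, ?_, ?_⟩
          · simp only [hDset, Finset.mem_filter, Finset.mem_range]
            refine ⟨by omega, [], by simp, by simp, ?_⟩
            simp [wordFactor]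
          · apply Finset.mem_image.mpr
            exact ⟨0, by simp, by omega⟩
        · rw [List.concat_eq_append] at hL hpal hjoin
          set n' := L'.flatten.length with hn'
          have hj : L'.flatten ++ Pl = wordFactor w 0 n := by
            simpa using hjoin
          have hn_eq : n = n' + Pl.length := by
            have := congrArg List.length hj
            simp only [List.length_append, wf_length] at this
            omega
          have hsplit : wordFactor w 0 n = wordFactor w 0 n' ++ wordFactor w n' Pl.length := by
            rw [hn_eq, wf_add, Nat.zero_add]
          have hinj := List.append_inj (hj.trans hsplit) (by rw [wf_length])
          have hn'D : n' ∈ Dset q := by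
            simp only [hDset, Finset.mem_filter, Finset.mem_range]
            refine ⟨by omega, L', ?_, ?_, hinj.1⟩
            · simp only [List.length_append, List.length_singleton] at hL
              omega
            · intro p hp
              exact hpal p (List.mem_append_left _ hp)
          apply Finset.mem_biUnion.mpr
          refine ⟨n', hn'D, ?_⟩
          apply Finset.mem_image.mpr
          refine ⟨Pl.length, ?_, hn_eq.symm⟩
          rcases Nat.eq_zero_or_pos Pl.length with h0 | hpos
          · simp [h0]
          · apply Finset.mem_insert.mpr
            right
            simp only [hSset, Finset.mem_filter, Finset.mem_Icc]
            refine ⟨⟨hpos, by omega⟩, ?_⟩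
            have hPl : Pl.Palindrome := hpal Pl (List.mem_append_right _ (List.mem_singleton_self _))
            rw [hinj.2] at hPl
            exact hPl
      have hcard2 : (Dset (q + 1)).card ≤ (Dset q).card * (B + 1) := by
        calc (Dset (q + 1)).card
            ≤ ((Dset q).biUnion fun n' => (insert 0 (Sset n')).image (fun l => n' + l)).card :=
              Finset.card_le_card hsub
          _ ≤ ∑ n' ∈ Dset q, ((insert 0 (Sset n')).image (fun l => n' + l)).card :=
              Finset.card_biUnion_le
          _ ≤ ∑ n' ∈ Dset q, (B + 1) := by
              apply Finset.sum_le_sum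
              intro n' _
              calc ((insert 0 (Sset n')).image (fun l => n' + l)).card
                  ≤ (insert 0 (Sset n')).card := Finset.card_image_le
                _ ≤ (Sset n').card + 1 := Finset.card_insert_le _ _
                _ ≤ B + 1 := by have := hScard n'; omega
          _ = (Dset q).card * (B + 1) := by rw [Finset.sum_const, smul_eq_mul]
      calc (Dset (q + 1)).card ≤ (Dset q).card * (B + 1) := hcard2
        _ ≤ (B + 1) ^ q * (B + 1) := Nat.mul_le_mul_right _ ih
        _ = (B + 1) ^ (q + 1) := (pow_succ _ _).symm
  have hlog : Nat.log 2 N = m := Nat.log_pow one_lt_two m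
  have hBN : (B + 1) ^ P ≤ N := by
    rw [hB, hlog]
    have h1 : (k - 1) * (m + 1) + 1 ≤ k * (m + 1) := by
      have h2 : k * (m + 1) = (k - 1) * (m + 1) + (m + 1) := by
        have hk1 : k = (k - 1) + 1 := by omega
        calc k * (m + 1) = ((k - 1) + 1) * (m + 1) := by rw [← hk1]
          _ = (k - 1) * (m + 1) + (m + 1) := by ring
      omega
    exact le_trans (Nat.pow_le_pow_left h1 P) hmP
  by_contra hcon
  push_neg at hcon
  have hall : Finset.range (N + 1) ⊆ Dset P := by
    intro n hn
    simp only [hDset, Finset.mem_filter]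
    exact ⟨hn, hcon n⟩
  have hfin : N + 1 ≤ (B + 1) ^ P := by
    calc N + 1 = (Finset.range (N + 1)).card := (Finset.card_range _).symm
      _ ≤ (Dset P).card := Finset.card_le_card hall
      _ ≤ (B + 1) ^ P := hD P
  omega
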